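/- In the multi-class case (the columns y₁,…,y_m ∈ {0,1}ⁿ have pairwise disjoint supports whose union is [n]), a ternary Huffman tree T for the weights pⱼ = ‖yⱼ‖₁/n satisfies c(T) ≤ n + (3n/log₂ 3)·H(p₁,…,p_m) + 3n, and hence c(T) ≤ min_{T'} c(T') + 3n. -/

import Mathlib

/-- A rooted tree with leaves labeled by `α`. -/
inductive RTree (α : Type) where
  | leaf : α → RTree α
  | node : List (RTree α) → RTree α

namespace RTree

/-- The list of leaf labels of a tree. -/
def leaves {α : Type} : RTree α → List α
  | .leaf a => [a]
  | .node ts => (ts.attach.map (fun ⟨t, _⟩ => t.leaves)).flatten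

/-- Depth of the tree: maximum number of edges on a root-to-leaf path. -/
def depth {α : Type} : RTree α → ℕ
  | .leaf _ => 0
  | .node ts => 1 + (ts.attach.map (fun ⟨t, _⟩ => t.depth)).foldr max 0

/-- Maximum degree (number of children) over all nodes. -/
def maxdeg {α : Type} : RTree α → ℕ
  | .leaf _ => 0
  | .node ts => max ts.length ((ts.attach.map (fun ⟨t, _⟩ => t.maxdeg)).foldr max 0)

end RTree

/-- Hamming weight of a binary vector. -/
def hw {n : ℕ} (z : Fin n → Bool) : ℕ := (Finset.univ.filter (fun i => z i = true)).card

/-- Coordinatewise OR of a list of binary vectors. -/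
def orv {n : ℕ} (ys : List (Fin n → Bool)) : Fin n → Bool := fun i => ys.any (fun y => y i)

/-- `∑_{v ∈ V(T)} ‖z_v‖₁ · deg(v)`, where `z_v` is the OR of the leaf labels below `v`
and `deg(v)` the number of children of `v` (0 for leaves). -/
def RTree.cost {n : ℕ} : RTree (Fin n → Bool) → ℕ
  | .leaf _ => 0
  | .node ts => hw (orv (RTree.leaves (.node ts))) * ts.length
      + (ts.attach.map (fun ⟨t, _⟩ => t.cost)).sum

namespace RTree

@[simp] lemma leaves_leaf {α} (a : α) : (leaf a).leaves = [a] := by rw [leaves]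
@[simp] lemma leaves_node {α} (ts : List (RTree α)) :
    (node ts).leaves = (ts.map leaves).flatten := by
  rw [leaves]; congr 1; exact List.attach_map_val

@[simp] lemma maxdeg_leaf {α} (a : α) : (leaf a).maxdeg = 0 := by rw [maxdeg]
@[simp] lemma maxdeg_node {α} (ts : List (RTree α)) :
    (node ts).maxdeg = max ts.length ((ts.map maxdeg).foldr max 0) := by
  rw [maxdeg]; congr 2; exact List.attach_map_val

@[simp] lemma cost_leaf {n : ℕ} (a : Fin n → Bool) : (leaf a).cost = 0 := by rw [cost]
@[simp] lemma cost_node {n : ℕ} (ts : List (RTree (Fin n → Bool))) :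
    (node ts).cost = hw (orv ((ts.map leaves).flatten)) * ts.length + (ts.map cost).sum := by
  rw [cost]
  congr 2
  · simp
  · exact List.attach_map_val

lemma myind {α} {P : RTree α → Prop} (hl : ∀ a, P (leaf a))
    (hn : ∀ ts : List (RTree α), (∀ t ∈ ts, P t) → P (node ts)) : ∀ t, P t
  | leaf a => hl a
  | node ts => hn ts (fun t _ => myind hl hn t)
termination_by t => sizeOf t
decreasing_by
  rename_i ht
  simp [RTree.node.sizeOf_spec]
  have := List.sizeOf_lt_of_mem ht
  omega

end RTree

def disj {n : ℕ} (a b : Fin n → Bool) : Prop := ∀ i, ¬(a i = true ∧ b i = true)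

lemma disj_symm {n : ℕ} : Symmetric (@disj n) := by
  intro a b h i hi
  exact h i ⟨hi.2, hi.1⟩

lemma hwset_orv_append {n : ℕ} (l1 l2 : List (Fin n → Bool)) :
    (Finset.univ.filter (fun i => orv (l1 ++ l2) i = true)) =
      (Finset.univ.filter (fun i => orv l1 i = true)) ∪
      (Finset.univ.filter (fun i => orv l2 i = true)) := by
  ext i
  simp [orv, List.any_append, or_comm]

lemma hw_orv_append_le {n : ℕ} (l1 l2 : List (Fin n → Bool)) :
    hw (orv (l1 ++ l2)) ≤ hw (orv l1) + hw (orv l2) := by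
  rw [hw, hwset_orv_append]
  exact Finset.card_union_le _ _

lemma hw_orv_cons_le {n : ℕ} (a : Fin n → Bool) (l : List (Fin n → Bool)) :
    hw (orv (a :: l)) ≤ hw a + hw (orv l) := by
  have := hw_orv_append_le [a] l
  simpa [orv, hw] using this

lemma hw_orv_le_sum {n : ℕ} (l : List (Fin n → Bool)) :
    hw (orv l) ≤ (l.map hw).sum := by
  induction l with
  | nil => simp [hw, orv]
  | cons a l ih =>
    calc hw (orv (a :: l)) ≤ hw a + hw (orv l) := hw_orv_cons_le a l
    _ ≤ hw a + (l.map hw).sum := by omega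
    _ = ((a :: l).map hw).sum := by simp

lemma hw_orv_append_eq {n : ℕ} (l1 l2 : List (Fin n → Bool))
    (h : ∀ a ∈ l1, ∀ b ∈ l2, disj a b) :
    hw (orv (l1 ++ l2)) = hw (orv l1) + hw (orv l2) := by
  rw [hw, hwset_orv_append, Finset.card_union_of_disjoint]
  · rfl
  rw [Finset.disjoint_filter]
  intro i _ h1 h2
  simp only [orv, List.any_eq_true] at h1 h2
  obtain ⟨a, ha, hai⟩ := h1
  obtain ⟨b, hb, hbi⟩ := h2
  exact h a ha b hb i ⟨hai, hbi⟩

lemma hw_orv_eq_sum {n : ℕ} (l : List (Fin n → Bool)) (h : l.Pairwise disj) :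
    hw (orv l) = (l.map hw).sum := by
  induction l with
  | nil => simp [hw, orv]
  | cons a l ih =>
    rw [List.pairwise_cons] at h
    have h1 := hw_orv_append_eq [a] l (by intro x hx b hb; simp at hx; subst hx; exact h.1 b hb)
    simp only [List.singleton_append] at h1
    rw [h1, ih h.2]
    simp [orv, hw]

lemma orv_perm {n : ℕ} {l l' : List (Fin n → Bool)} (h : l.Perm l') : orv l = orv l' := by
  funext i
  simp only [orv]
  induction h with
  | nil => rfl
  | cons x h ih => simp [ih]
  | swap x y l => simp [Bool.or_left_comm, Bool.or_assoc, Bool.or_comm]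
  | trans h1 h2 ih1 ih2 => rw [ih1, ih2]

lemma hw_orv_flatten_le {n : ℕ} (ls : List (List (Fin n → Bool))) :
    hw (orv ls.flatten) ≤ (ls.map (fun l => hw (orv l))).sum := by
  induction ls with
  | nil => simp [hw, orv]
  | cons a ls ih =>
    rw [List.flatten_cons, List.map_cons, List.sum_cons]
    exact le_trans (hw_orv_append_le a ls.flatten) (by omega)

lemma hw_orv_flatten_eq {n : ℕ} (ls : List (List (Fin n → Bool)))
    (h : ls.flatten.Pairwise disj) :
    hw (orv ls.flatten) = (ls.map (fun l => hw (orv l))).sum := by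
  induction ls with
  | nil => simp [hw, orv]
  | cons a ls ih =>
    rw [List.flatten_cons] at h ⊢
    rw [List.pairwise_append] at h
    rw [hw_orv_append_eq _ _ h.2.2, ih h.2.1]
    simp

section Greedy
variable {α : Type*}

lemma greedy (v : α → ℕ) : ∀ (l : List α) (cap : ℕ), ∃ A B : List α,
    l = A ++ B ∧ (A.map v).sum ≤ cap ∧ (∀ b ∈ B.head?, cap < (A.map v).sum + v b) ∧
    ((∀ x ∈ l, v x ≤ cap) → l ≠ [] → A ≠ []) := by
  intro l
  induction l with
  | nil => exact fun cap => ⟨[], [], by simp⟩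
  | cons a l ih =>
    intro cap
    by_cases h : v a ≤ cap
    · obtain ⟨A', B', hsplit, hsum, hhead, _⟩ := ih (cap - v a)
      refine ⟨a :: A', B', by simp [hsplit], by simp; omega, ?_, by simp⟩
      intro b hb
      have := hhead b hb
      simp only [List.map_cons, List.sum_cons]
      omega
    · refine ⟨[], a :: l, by simp, by simp, ?_, ?_⟩
      · intro b hb
        simp only [List.head?_cons, Option.mem_def, Option.some.injEq] at hb
        subst hb
        simpa using Nat.lt_of_not_le h
      · intro hall _
        exact absurd (hall a (by simp)) h

lemma full_group {s cap d : ℕ} (h1 : d ∣ s) (h2 : d ∣ cap) (h3 : s ≤ cap)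
    (h4 : cap < s + d) : s = cap := by
  have h5 : d ∣ cap - s := Nat.dvd_sub h2 h1
  rcases h5 with ⟨k, hk⟩
  rcases Nat.eq_zero_or_pos k with hk0 | hk0
  · subst hk0
    simp at hk
    omega
  · have : d ≤ cap - s := hk ▸ Nat.le_mul_of_pos_right d hk0
    omega

end Greedy

lemma group_cost {n : ℕ} (G : List (RTree (Fin n → Bool) × ℕ)) (h : ∀ p ∈ G, 1 ≤ p.2) :
    3 * ((G.map (fun p => hw (orv p.1.leaves))).sum) +
      (G.map (fun p => p.1.cost + 3 * hw (orv p.1.leaves) * (p.2 - 1))).sum ≤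
    (G.map (fun p => p.1.cost + 3 * hw (orv p.1.leaves) * p.2)).sum := by
  induction G with
  | nil => simp
  | cons p G ih =>
    have hp := h p (by simp)
    have ihh := ih (fun q hq => h q (by simp [hq]))
    simp only [List.map_cons, List.sum_cons]
    have : 3 * hw (orv p.1.leaves) + 3 * hw (orv p.1.leaves) * (p.2 - 1)
        = 3 * hw (orv p.1.leaves) * p.2 := by
      rcases Nat.exists_eq_add_of_le hp with ⟨e, he⟩
      rw [he]
      simp only [Nat.add_sub_cancel_left]
      ring
    omega

lemma kraft {n : ℕ} : ∀ (D : ℕ) (L : List (RTree (Fin n → Bool) × ℕ)),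
    L ≠ [] →
    L.Pairwise (fun p q => p.2 ≤ q.2) →
    (∀ p ∈ L, p.2 ≤ D) →
    (∀ p ∈ L, p.1.maxdeg ≤ 3) →
    (L.map (fun p => 3 ^ (D - p.2))).sum ≤ 3 ^ D →
    ∃ t : RTree (Fin n → Bool),
      t.leaves = (L.map (fun p => p.1.leaves)).flatten ∧
      t.maxdeg ≤ 3 ∧
      t.cost ≤ (L.map (fun p => p.1.cost + 3 * hw (orv p.1.leaves) * p.2)).sum := by
  intro D
  induction D with
  | zero =>
    intro L hne hsort hle hmd hsum
    match L, hne with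
    | [p], _ =>
      exact ⟨p.1, by simp, hmd p (by simp), by simp⟩
    | p :: q :: L', _ =>
      exfalso
      simp only [List.map_cons, List.sum_cons, Nat.zero_sub, pow_zero] at hsum
      have : 0 ≤ (L'.map (fun p => 3 ^ (0 - p.2))).sum := Nat.zero_le _
      omega
  | succ D ih =>
    intro L hne hsort hle hmd hsum
    match L, hne, hsort with
    | [p], _, _ =>
      exact ⟨p.1, by simp, hmd p (by simp), by simp⟩
    | p :: q :: L', _, hsort =>
      set L := p :: q :: L' with hL
      have hd1 : ∀ r ∈ L, 1 ≤ r.2 := by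
        intro r hr
        by_contra hcon
        push_neg at hcon
        have h0 : r.2 = 0 := by omega
        have hp0 : p.2 = 0 := by
          rw [hL] at hr
          simp only [List.mem_cons] at hr
          rcases hr with rfl | hr
          · exact h0
          · have hle' := (List.pairwise_cons.mp (hL ▸ hsort)).1 r (by simpa using hr)
            omega
        have hq1 : 0 < 3 ^ (D + 1 - q.2) := Nat.pow_pos (by norm_num)
        have hsum' := hsum
        rw [hL] at hsum'
        simp only [List.map_cons, List.sum_cons, hp0, Nat.sub_zero] at hsum'
        have : 0 ≤ (L'.map (fun p => 3 ^ (D + 1 - p.2))).sum := Nat.zero_le _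
        omega
      have hvle : ∀ r ∈ L, 3 ^ (D + 1 - r.2) ≤ 3 ^ D :=
        fun r hr => Nat.pow_le_pow_right (by norm_num) (by have := hd1 r hr; omega)
      -- builder for a group
      have build : ∀ G : List (RTree (Fin n → Bool) × ℕ), G ≠ [] →
          G.Pairwise (fun p q => p.2 ≤ q.2) → (∀ r ∈ G, r ∈ L) →
          ((G.map (fun p => 3 ^ (D + 1 - p.2))).sum ≤ 3 ^ D) →
          ∃ t : RTree (Fin n → Bool),
            t.leaves = (G.map (fun p => p.1.leaves)).flatten ∧
            t.maxdeg ≤ 3 ∧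
            t.cost ≤ (G.map (fun p => p.1.cost + 3 * hw (orv p.1.leaves) * (p.2 - 1))).sum := by
        intro G hGne hGsort hGsub hGsum
        obtain ⟨t, ht1, ht2, ht3⟩ := ih (G.map (fun p => (p.1, p.2 - 1)))
          (by simpa using hGne)
          (List.Pairwise.map _ (fun a b hab => by simpa using Nat.sub_le_sub_right hab 1) hGsort)
          (by
            intro r hr
            simp only [List.mem_map] at hr
            obtain ⟨s, hs, rfl⟩ := hr
            have := hle s (hGsub s hs)
            simp
            omega)
          (by
            intro r hr
            simp only [List.mem_map] at hr
            obtain ⟨s, hs, rfl⟩ := hr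
            exact hmd s (hGsub s hs))
          (by
            rw [List.map_map]
            calc ((G.map (fun p => 3 ^ (D - ((p.1, p.2 - 1) : RTree (Fin n → Bool) × ℕ).2)))).sum
                = (G.map (fun p => 3 ^ (D + 1 - p.2))).sum := by
                  apply congrArg
                  apply List.map_congr_left
                  intro s hs
                  have h1 := hd1 s (hGsub s hs)
                  have h2 := hle s (hGsub s hs)
                  simp only
                  congr 1
                  omega
              _ ≤ 3 ^ D := hGsum)
        rw [List.map_map] at ht1 ht3
        exact ⟨t, ht1, ht2, ht3⟩
      -- greedy split
      obtain ⟨A, Brest, hAB, hAsum, hAhead, hAne⟩ := greedy (fun p => 3 ^ (D + 1 - p.2)) L (3 ^ D)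
      have hAne' : A ≠ [] := hAne (fun x hx => hvle x hx) (by rw [hL]; simp)
      have hsortAB : (A ++ Brest).Pairwise (fun p q => (p.2 : ℕ) ≤ q.2) := by
        rw [← hAB]; exact hsort
      have hsortA : A.Pairwise (fun p q => (p.2 : ℕ) ≤ q.2) := (List.pairwise_append.mp hsortAB).1
      have hmemA : ∀ r ∈ A, r ∈ L := by intro r hr; rw [hAB]; simp [hr]
      rcases Brest with _ | ⟨b0, Brest'⟩
      · -- single group
        have hAL : L = A := by simpa using hAB
        obtain ⟨tA, h1A, h2A, h3A⟩ := build A hAne' hsortA hmemA hAsum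
        refine ⟨.node [tA], ?_, ?_, ?_⟩
        · simp [h1A, hAL]
        · simp only [RTree.maxdeg_node, List.length_cons, List.length_nil, List.map_cons,
            List.map_nil, List.foldr_cons, List.foldr_nil]
          omega
        · rw [RTree.cost_node]
          have hor : hw (orv tA.leaves) ≤
              (A.map (fun p => hw (orv p.1.leaves))).sum := by
            rw [h1A]
            exact le_trans (hw_orv_flatten_le _) (le_of_eq (by rw [List.map_map]; rfl))
          have hgc := group_cost A (fun r hr => hd1 r (hmemA r hr))
          simp only [List.map_cons, List.map_nil, List.sum_cons, List.sum_nil, List.length_cons,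
            List.length_nil, List.flatten_cons, List.flatten_nil, List.append_nil]
          rw [hAL]
          omega
      · -- at least two groups
        have hb0L : b0 ∈ L := by rw [hAB]; simp
        have hAfull : (A.map (fun p => 3 ^ (D + 1 - p.2))).sum = 3 ^ D := by
          apply full_group (d := 3 ^ (D + 1 - b0.2))
          · apply List.dvd_sum
            intro x hx
            simp only [List.mem_map] at hx
            obtain ⟨a, ha, rfl⟩ := hx
            apply pow_dvd_pow
            have hab : a.2 ≤ b0.2 := (List.pairwise_append.mp hsortAB).2.2 a ha b0 (by simp)
            omega
          · exact pow_dvd_pow 3 (by have := hd1 b0 hb0L; omega)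
          · exact hAsum
          · exact hAhead b0 (by simp)
        have hsortBrest : (b0 :: Brest').Pairwise (fun p q => (p.2 : ℕ) ≤ q.2) :=
          (List.pairwise_append.mp hsortAB).2.1
        obtain ⟨B, C, hBC, hBsum, hBhead, hBne⟩ :=
          greedy (fun p => 3 ^ (D + 1 - p.2)) (b0 :: Brest') (3 ^ D)
        have hmemBC : ∀ r ∈ b0 :: Brest', r ∈ L := by
          intro r hr; rw [hAB]; simp [hr]
        have hBne' : B ≠ [] :=
          hBne (fun x hx => hvle x (hmemBC x hx)) (by simp)
        have hsortB : B.Pairwise (fun p q => (p.2 : ℕ) ≤ q.2) :=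
          (List.pairwise_append.mp (hBC ▸ hsortBrest)).1
        have hmemB : ∀ r ∈ B, r ∈ L := fun r hr => hmemBC r (by rw [hBC]; simp [hr])
        obtain ⟨tA, h1A, h2A, h3A⟩ := build A hAne' hsortA hmemA (le_of_eq hAfull)
        obtain ⟨tB, h1B, h2B, h3B⟩ := build B hBne' hsortB hmemB hBsum
        rcases C with _ | ⟨c0, C'⟩
        · -- two groups
          have hBL : L = A ++ B := by rw [hAB]; rw [hBC]; simp
          refine ⟨.node [tA, tB], ?_, ?_, ?_⟩
          · simp [h1A, h1B, hBL]
          · simp only [RTree.maxdeg_node, List.length_cons, List.length_nil, List.map_cons,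
              List.map_nil, List.foldr_cons, List.foldr_nil]
            omega
          · rw [RTree.cost_node]
            have hor : hw (orv (tA.leaves ++ tB.leaves)) ≤
                (A.map (fun p => hw (orv p.1.leaves))).sum +
                (B.map (fun p => hw (orv p.1.leaves))).sum := by
              have e1 : hw (orv tA.leaves) ≤ (A.map (fun p => hw (orv p.1.leaves))).sum := by
                rw [h1A]
                exact le_trans (hw_orv_flatten_le _) (le_of_eq (by rw [List.map_map]; rfl))
              have e2 : hw (orv tB.leaves) ≤ (B.map (fun p => hw (orv p.1.leaves))).sum := by
                rw [h1B]
                exact le_trans (hw_orv_flatten_le _) (le_of_eq (by rw [List.map_map]; rfl))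
              have := hw_orv_append_le tA.leaves tB.leaves
              omega
            have hgcA := group_cost A (fun r hr => hd1 r (hmemA r hr))
            have hgcB := group_cost B (fun r hr => hd1 r (hmemB r hr))
            simp only [List.map_cons, List.map_nil, List.sum_cons, List.sum_nil, List.length_cons,
              List.length_nil, List.flatten_cons, List.flatten_nil, List.append_nil]
            rw [hBL]
            simp only [List.map_append, List.sum_append]
            omega
        · -- three groups
          have hc0BC : c0 ∈ b0 :: Brest' := by rw [hBC]; simp
          have hBfull : (B.map (fun p => 3 ^ (D + 1 - p.2))).sum = 3 ^ D := by
            apply full_group (d := 3 ^ (D + 1 - c0.2))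
            · apply List.dvd_sum
              intro x hx
              simp only [List.mem_map] at hx
              obtain ⟨a, ha, rfl⟩ := hx
              apply pow_dvd_pow
              have hab : a.2 ≤ c0.2 :=
                (List.pairwise_append.mp (hBC ▸ hsortBrest)).2.2 a ha c0 (by simp)
              omega
            · exact pow_dvd_pow 3 (by have := hd1 c0 (hmemBC c0 hc0BC); omega)
            · exact hBsum
            · exact hBhead c0 (by simp)
          have hCL : L = A ++ B ++ (c0 :: C') := by rw [hAB, hBC]; simp
          have hsortC : (c0 :: C').Pairwise (fun p q => (p.2 : ℕ) ≤ q.2) :=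
            (List.pairwise_append.mp (hBC ▸ hsortBrest)).2.1
          have hmemC : ∀ r ∈ c0 :: C', r ∈ L := fun r hr => hmemBC r (by rw [hBC]; simp [hr])
          have hCsum : ((c0 :: C').map (fun p => 3 ^ (D + 1 - p.2))).sum ≤ 3 ^ D := by
            have hsum' := hsum
            rw [hCL] at hsum'
            simp only [List.map_append, List.sum_append] at hsum'
            have hpow : (3:ℕ) ^ (D + 1) = 3 * 3 ^ D := by ring
            omega
          obtain ⟨tC, h1C, h2C, h3C⟩ := build (c0 :: C') (by simp) hsortC hmemC hCsum
          refine ⟨.node [tA, tB, tC], ?_, ?_, ?_⟩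
          · simp [h1A, h1B, h1C, hCL]
          · simp only [RTree.maxdeg_node, List.length_cons, List.length_nil, List.map_cons,
              List.map_nil, List.foldr_cons, List.foldr_nil]
            omega
          · rw [RTree.cost_node]
            have hor : hw (orv (tA.leaves ++ (tB.leaves ++ tC.leaves))) ≤
                (A.map (fun p => hw (orv p.1.leaves))).sum +
                (B.map (fun p => hw (orv p.1.leaves))).sum +
                ((c0 :: C').map (fun p => hw (orv p.1.leaves))).sum := by
              have e1 : hw (orv tA.leaves) ≤ (A.map (fun p => hw (orv p.1.leaves))).sum := by
                rw [h1A]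
                exact le_trans (hw_orv_flatten_le _) (le_of_eq (by rw [List.map_map]; rfl))
              have e2 : hw (orv tB.leaves) ≤ (B.map (fun p => hw (orv p.1.leaves))).sum := by
                rw [h1B]
                exact le_trans (hw_orv_flatten_le _) (le_of_eq (by rw [List.map_map]; rfl))
              have e3 : hw (orv tC.leaves) ≤
                  ((c0 :: C').map (fun p => hw (orv p.1.leaves))).sum := by
                rw [h1C]
                exact le_trans (hw_orv_flatten_le _) (le_of_eq (by rw [List.map_map]; rfl))
              have u1 := hw_orv_append_le tA.leaves (tB.leaves ++ tC.leaves)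
              have u2 := hw_orv_append_le tB.leaves tC.leaves
              omega
            have hgcA := group_cost A (fun r hr => hd1 r (hmemA r hr))
            have hgcB := group_cost B (fun r hr => hd1 r (hmemB r hr))
            have hgcC := group_cost (c0 :: C') (fun r hr => hd1 r (hmemC r hr))
            simp only [List.map_cons, List.map_nil, List.sum_cons, List.sum_nil, List.length_cons,
              List.length_nil, List.flatten_cons, List.flatten_nil, List.append_nil]
            rw [hCL]
            simp only [List.map_append, List.sum_append]
            omega

/-! ### List helper lemmas -/

lemma list_sum_map_add {α : Type*} (l : List α) (f g : α → ℝ) :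
    (l.map (fun x => f x + g x)).sum = (l.map f).sum + (l.map g).sum := by
  induction l with
  | nil => simp
  | cons a l ih => simp [ih]; ring

lemma list_sum_map_mul_const {α : Type*} (l : List α) (f : α → ℝ) (c : ℝ) :
    (l.map (fun x => f x * c)).sum = (l.map f).sum * c := by
  induction l with
  | nil => simp
  | cons a l ih => simp [ih]; ring

lemma list_sum_map_const_mul {α : Type*} (l : List α) (f : α → ℝ) (c : ℝ) :
    (l.map (fun x => c * f x)).sum = c * (l.map f).sum := by
  induction l with
  | nil => simp
  | cons a l ih => simp [ih]; ring

lemma list_sum_map_const {α : Type*} (l : List α) (c : ℝ) :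
    (l.map (fun _ => c)).sum = l.length * c := by
  induction l with
  | nil => simp
  | cons a l ih => simp [ih]; ring

lemma list_le_foldr_max (l : List ℕ) (x : ℕ) (hx : x ∈ l) : x ≤ l.foldr max 0 := by
  induction l with
  | nil => simp at hx
  | cons a l ih =>
    simp only [List.foldr_cons]
    rcases List.mem_cons.mp hx with rfl | hx
    · exact le_max_left _ _
    · exact le_trans (ih hx) (le_max_right _ _)

lemma list_mem_le_sum (l : List ℕ) (x : ℕ) (hx : x ∈ l) : x ≤ l.sum := by
  induction l with
  | nil => simp at hx
  | cons a l ih =>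
    simp only [List.sum_cons]
    rcases List.mem_cons.mp hx with rfl | hx
    · omega
    · have := ih hx; omega

lemma list_sum_map_real_nonneg {α : Type*} (l : List α) (f : α → ℝ)
    (h : ∀ x ∈ l, 0 ≤ f x) : 0 ≤ (l.map f).sum := by
  induction l with
  | nil => simp
  | cons a l ih =>
    simp only [List.map_cons, List.sum_cons]
    have := h a (by simp)
    have := ih (fun x hx => h x (by simp [hx]))
    linarith

/-! ### phi and the entropy lower bound -/

noncomputable def phi {n : ℕ} : RTree (Fin n → Bool) → ℝ
  | .leaf _ => 0
  | .node ts => (hw (orv (RTree.leaves (.node ts))) : ℝ) * Real.log ts.length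
      + (ts.attach.map (fun ⟨t, _⟩ => phi t)).sum
termination_by t => sizeOf t
decreasing_by
  rename_i ht
  simp [RTree.node.sizeOf_spec]
  have := List.sizeOf_lt_of_mem ht
  omega

@[simp] lemma phi_leaf {n : ℕ} (a : Fin n → Bool) : phi (.leaf a) = 0 := by rw [phi]

@[simp] lemma phi_node {n : ℕ} (ts : List (RTree (Fin n → Bool))) :
    phi (.node ts) = (hw (orv ((ts.map RTree.leaves).flatten)) : ℝ) * Real.log ts.length
      + (ts.map phi).sum := by
  rw [phi]
  congr 2
  · simp
  · exact List.attach_map_val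

lemma nat_cube_le_pow (k : ℕ) : k ^ 3 ≤ 3 ^ k := by
  induction k with
  | zero => norm_num
  | succ k ih =>
    rcases Nat.lt_or_ge k 3 with h | h
    · interval_cases k <;> norm_num
    · have : (k + 1) ^ 3 ≤ 3 * k ^ 3 := by
        rcases Nat.exists_eq_add_of_le h with ⟨m, rfl⟩
        ring_nf
        nlinarith [Nat.zero_le m, Nat.zero_le (m ^ 2), Nat.zero_le (m ^ 3)]
      calc (k + 1) ^ 3 ≤ 3 * k ^ 3 := this
        _ ≤ 3 * 3 ^ k := by omega
        _ = 3 ^ (k + 1) := by ring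

lemma log_deg_le (k : ℕ) : (3 / Real.log 3) * Real.log k ≤ k := by
  rcases Nat.eq_zero_or_pos k with rfl | hk
  · simp
  have hlog3 : 0 < Real.log 3 := Real.log_pos (by norm_num)
  rw [div_mul_eq_mul_div, div_le_iff₀ hlog3]
  have h1 : Real.log ((k : ℝ) ^ 3) ≤ Real.log ((3 : ℝ) ^ k) := by
    apply Real.log_le_log (by positivity)
    have := nat_cube_le_pow k
    calc ((k : ℝ) ^ 3) = ((k ^ 3 : ℕ) : ℝ) := by push_cast; ring
      _ ≤ ((3 ^ k : ℕ) : ℝ) := by exact_mod_cast this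
      _ = (3 : ℝ) ^ k := by push_cast; ring
  rw [Real.log_pow, Real.log_pow] at h1
  push_cast at h1 ⊢
  linarith


lemma list_sum_map_neg {α : Type*} (l : List α) (f : α → ℝ) :
    (l.map (fun x => -f x)).sum = -(l.map f).sum := by
  induction l with
  | nil => simp
  | cons a l ih => simp [ih]; ring

lemma orv_singleton {n : ℕ} (y : Fin n → Bool) : orv [y] = y := by
  funext i; simp [orv]

lemma cost_ge_phi {n : ℕ} : ∀ t : RTree (Fin n → Bool),
    (3 / Real.log 3) * phi t ≤ (t.cost : ℝ) := by
  apply RTree.myind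
  · intro a; simp
  · intro ts ih
    rw [phi_node, RTree.cost_node]
    push_cast
    rw [mul_add]
    have h1 : (3 / Real.log 3) * ((hw (orv ((ts.map RTree.leaves).flatten)) : ℝ) *
        Real.log ts.length) ≤ (hw (orv ((ts.map RTree.leaves).flatten)) : ℝ) * ts.length := by
      have := log_deg_le ts.length
      have hnn : (0:ℝ) ≤ (hw (orv ((ts.map RTree.leaves).flatten)) : ℝ) := by positivity
      calc (3 / Real.log 3) * ((hw (orv ((ts.map RTree.leaves).flatten)) : ℝ) *
            Real.log ts.length)
          = (hw (orv ((ts.map RTree.leaves).flatten)) : ℝ) *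
            ((3 / Real.log 3) * Real.log ts.length) := by ring
        _ ≤ _ := by exact mul_le_mul_of_nonneg_left this hnn
    have h2 : (3 / Real.log 3) * (ts.map phi).sum ≤ ((ts.map RTree.cost).sum : ℝ) := by
      rw [← list_sum_map_const_mul]
      rw [Nat.cast_list_sum, List.map_map]
      exact List.sum_le_sum (fun t ht => ih t ht)
    rw [Nat.cast_list_sum, List.map_map] at h2
    rw [List.map_map]
    linarith

lemma kl_list (l : List ℝ) (hpos : ∀ x ∈ l, 0 ≤ x) (hne : l ≠ []) :
    l.sum * Real.log l.sum ≤
      (l.map (fun a => a * Real.log a)).sum + l.sum * Real.log l.length := by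
  have hWnn : 0 ≤ l.sum := List.sum_nonneg hpos
  rcases eq_or_lt_of_le hWnn with hW0 | hWpos
  · have hall : ∀ x ∈ l, x = 0 := by
      intro x hx
      by_contra hx0
      have hxpos : 0 < x := lt_of_le_of_ne (hpos x hx) (Ne.symm hx0)
      have := List.single_le_sum hpos x hx
      linarith
    have h1 : (l.map (fun a => a * Real.log a)).sum = 0 := by
      apply List.sum_eq_zero
      intro x hx
      simp only [List.mem_map] at hx
      obtain ⟨a, ha, rfl⟩ := hx
      rw [hall a ha]; simp
    rw [← hW0, h1]
    simp
  · have hk : 0 < l.length := List.length_pos_iff.mpr hne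
    have hkR : (0:ℝ) < (l.length : ℝ) := by exact_mod_cast hk
    have key : ∀ a ∈ l, a * Real.log l.sum ≤
        (a * Real.log a + a * Real.log l.length) + (l.sum / l.length - a) := by
      intro a ha
      rcases eq_or_lt_of_le (hpos a ha) with h0 | hapos
      · rw [← h0]
        simp
        positivity
      · have harg : 0 < l.sum / ((l.length : ℝ) * a) := by positivity
        have hlog := Real.log_le_sub_one_of_pos harg
        have hexp : Real.log (l.sum / ((l.length : ℝ) * a)) =
            Real.log l.sum - Real.log l.length - Real.log a := by
          rw [Real.log_div (ne_of_gt hWpos) (by positivity),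
            Real.log_mul (ne_of_gt hkR) (ne_of_gt hapos)]
          ring
        rw [hexp] at hlog
        have := mul_le_mul_of_nonneg_left hlog (le_of_lt hapos)
        have ha3 : a * (l.sum / ((l.length : ℝ) * a) - 1) = l.sum / l.length - a := by
          field_simp
        rw [ha3] at this
        nlinarith [this]
    have hsum := List.sum_le_sum key
    rw [list_sum_map_mul_const] at hsum
    rw [list_sum_map_add, list_sum_map_add] at hsum
    rw [list_sum_map_mul_const] at hsum
    simp only [List.map_id'] at hsum
    have hconst : (l.map (fun a => l.sum / (l.length : ℝ) - a)).sum = 0 := by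
      have : (l.map (fun a => l.sum / (l.length : ℝ) - a)).sum
          = (l.map (fun _ => l.sum / (l.length : ℝ))).sum + (l.map (fun a => -a)).sum := by
        simp only [sub_eq_add_neg]
        rw [← list_sum_map_add]
      rw [this, list_sum_map_const]
      have h2 : (l.map (fun a : ℝ => -a)).sum = -l.sum := by
        have := list_sum_map_neg l (fun a => a)
        simpa using this
      rw [h2]
      field_simp
      ring
    rw [hconst] at hsum
    linarith

lemma phi_ge {n : ℕ} : ∀ t : RTree (Fin n → Bool), t.leaves.Pairwise disj →
    ((t.leaves).map (fun y => (hw y : ℝ) *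
      Real.log ((hw (orv t.leaves) : ℝ) / (hw y : ℝ)))).sum ≤ phi t := by
  apply RTree.myind
  · intro a _
    simp only [RTree.leaves_leaf, List.map_cons, List.map_nil, List.sum_cons, List.sum_nil,
      phi_leaf, orv_singleton]
    rcases Nat.eq_zero_or_pos (hw a) with h0 | hpos
    · simp [h0]
    · rw [div_self (by exact_mod_cast ne_of_gt hpos)]
      simp
  · intro ts ih hdisj
    rcases ts with _ | ⟨t0, ts'⟩
    · simp [hw, orv]
    set ts := t0 :: ts' with hts
    simp only [RTree.leaves_node] at hdisj ⊢
    rw [phi_node]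
    set W := hw (orv ((ts.map RTree.leaves).flatten)) with hWdef
    -- W = sum of child weights
    have hWeq : W = (ts.map (fun c => hw (orv c.leaves))).sum := by
      rw [hWdef, hw_orv_flatten_eq _ hdisj, List.map_map]
      rfl
    -- each child's leaves pairwise disjoint
    have hchild : ∀ c ∈ ts, c.leaves.Pairwise disj := by
      intro c hc
      exact hdisj.sublist (List.sublist_flatten_of_mem (List.mem_map_of_mem hc))
    -- child weight sums
    have hWc : ∀ c ∈ ts, hw (orv c.leaves) = (c.leaves.map hw).sum :=
      fun c hc => hw_orv_eq_sum _ (hchild c hc)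
    have hWcleW : ∀ c ∈ ts, hw (orv c.leaves) ≤ W := by
      intro c hc
      rw [hWeq]
      exact list_mem_le_sum _ _ (List.mem_map_of_mem hc)
    -- rewrite LHS as sum over children
    have hLHS : (((ts.map RTree.leaves).flatten).map
        (fun y => (hw y : ℝ) * Real.log ((W : ℝ) / (hw y : ℝ)))).sum =
        (ts.map (fun c => ((c.leaves.map
          (fun y => (hw y : ℝ) * Real.log ((W : ℝ) / (hw y : ℝ)))).sum))).sum := by
      rw [List.map_flatten, List.sum_flatten, List.map_map, List.map_map]
      rfl
    rw [hLHS]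
    -- per-child bound
    have hper : ∀ c ∈ ts, ((c.leaves.map
        (fun y => (hw y : ℝ) * Real.log ((W : ℝ) / (hw y : ℝ)))).sum) ≤
        phi c + (hw (orv c.leaves) : ℝ) * (Real.log W - Real.log (hw (orv c.leaves))) := by
      intro c hc
      have hterm : ∀ y ∈ c.leaves,
          (hw y : ℝ) * Real.log ((W : ℝ) / (hw y : ℝ)) =
          (hw y : ℝ) * Real.log ((hw (orv c.leaves) : ℝ) / (hw y : ℝ)) +
          (hw y : ℝ) * (Real.log W - Real.log (hw (orv c.leaves))) := by
        intro y hy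
        rcases Nat.eq_zero_or_pos (hw y) with h0 | hpos
        · simp [h0]
        · have hWcy : hw y ≤ hw (orv c.leaves) := by
            rw [hWc c hc]
            exact list_mem_le_sum _ _ (List.mem_map_of_mem hy)
          have hWcpos : 0 < hw (orv c.leaves) := lt_of_lt_of_le hpos hWcy
          have hWpos : 0 < W := lt_of_lt_of_le hWcpos (hWcleW c hc)
          rw [Real.log_div (by exact_mod_cast ne_of_gt hWpos) (by exact_mod_cast ne_of_gt hpos),
            Real.log_div (by exact_mod_cast ne_of_gt hWcpos) (by exact_mod_cast ne_of_gt hpos)]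
          ring
      have hsum1 : ((c.leaves.map
          (fun y => (hw y : ℝ) * Real.log ((W : ℝ) / (hw y : ℝ)))).sum) =
          ((c.leaves.map (fun y => (hw y : ℝ) *
            Real.log ((hw (orv c.leaves) : ℝ) / (hw y : ℝ)))).sum) +
          ((c.leaves.map (fun y => (hw y : ℝ))).sum) *
            (Real.log W - Real.log (hw (orv c.leaves))) := by
        rw [← list_sum_map_mul_const, ← list_sum_map_add]
        apply congrArg
        apply List.map_congr_left
        intro y hy
        exact hterm y hy
      rw [hsum1]
      have hcast : ((c.leaves.map (fun y => (hw y : ℝ))).sum) = (hw (orv c.leaves) : ℝ) := by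
        rw [hWc c hc, Nat.cast_list_sum, List.map_map]
        rfl
      rw [hcast]
      have := ih c hc (hchild c hc)
      linarith
    -- sum per-child bounds
    have hsum2 := List.sum_le_sum hper
    -- KL step
    have hkl := kl_list (ts.map (fun c => (hw (orv c.leaves) : ℝ)))
      (by intro x hx; simp only [List.mem_map] at hx; obtain ⟨c, hc, rfl⟩ := hx; positivity)
      (by simp [hts])
    rw [List.map_map] at hkl
    simp only [Function.comp_def, List.length_map] at hkl
    have hsumcast : ((ts.map (fun c => ((hw (orv c.leaves) : ℝ)))).sum) = (W : ℝ) := by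
      rw [hWeq, Nat.cast_list_sum, List.map_map]
      rfl
    rw [hsumcast] at hkl
    -- decompose RHS of hsum2
    have hdec : (ts.map (fun c => phi c + (hw (orv c.leaves) : ℝ) *
        (Real.log W - Real.log (hw (orv c.leaves))))).sum =
        (ts.map phi).sum + ((W : ℝ) * Real.log W -
          (ts.map (fun c => (hw (orv c.leaves) : ℝ) * Real.log (hw (orv c.leaves)))).sum) := by
      calc (ts.map (fun c => phi c + (hw (orv c.leaves) : ℝ) *
            (Real.log W - Real.log (hw (orv c.leaves))))).sum
          = (ts.map (fun c => phi c + ((hw (orv c.leaves) : ℝ) * Real.log W +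
              -((hw (orv c.leaves) : ℝ) * Real.log (hw (orv c.leaves)))))).sum := by
            apply congrArg
            apply List.map_congr_left
            intro c _
            ring
        _ = (ts.map phi).sum + (((ts.map (fun c => (hw (orv c.leaves) : ℝ) * Real.log W)).sum) +
              ((ts.map (fun c => -((hw (orv c.leaves) : ℝ) *
                Real.log (hw (orv c.leaves))))).sum)) := by
            rw [list_sum_map_add, list_sum_map_add]
        _ = _ := by
            rw [list_sum_map_mul_const, list_sum_map_neg]
            rw [show ((ts.map (fun c => ((hw (orv c.leaves)) : ℝ))).sum) = (W : ℝ) from hsumcast]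
            ring
    rw [hdec] at hsum2
    -- conclude
    have hfin : (W : ℝ) * Real.log W -
        (ts.map (fun c => (hw (orv c.leaves) : ℝ) * Real.log (hw (orv c.leaves)))).sum ≤
        (W : ℝ) * Real.log ts.length := by
      have := hkl
      linarith [hkl]
    linarith

/-! ### chain trees, depth choice, counting -/

lemma hw_orv_zero {n : ℕ} (l : List (Fin n → Bool)) (h : ∀ y ∈ l, hw y = 0) :
    hw (orv l) = 0 := by
  have h1 := hw_orv_le_sum l
  have h2 : (l.map hw).sum = 0 := List.sum_eq_zero (by
    intro x hx
    simp only [List.mem_map] at hx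
    obtain ⟨y, hy, rfl⟩ := hx
    exact h y hy)
  omega

def chain {n : ℕ} : List (Fin n → Bool) → RTree (Fin n → Bool)
  | [] => .node []
  | [a] => .leaf a
  | a :: b :: l => .node [.leaf a, chain (b :: l)]

@[simp] lemma chain_leaves {n : ℕ} : ∀ l : List (Fin n → Bool), (chain l).leaves = l
  | [] => by rw [chain]; simp
  | [a] => by rw [chain]; simp
  | a :: b :: l => by
    rw [chain]
    simp [chain_leaves (b :: l)]

lemma chain_maxdeg {n : ℕ} : ∀ l : List (Fin n → Bool), (chain l).maxdeg ≤ 2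
  | [] => by rw [chain]; simp
  | [a] => by rw [chain]; simp
  | a :: b :: l => by
    rw [chain]
    have := chain_maxdeg (b :: l)
    simp
    omega

lemma chain_cost {n : ℕ} : ∀ l : List (Fin n → Bool), (∀ y ∈ l, hw y = 0) →
    (chain l).cost = 0
  | [], _ => by rw [chain]; simp [hw, orv]
  | [a], _ => by rw [chain]; simp
  | a :: b :: l, h => by
    rw [chain, RTree.cost_node]
    have h1 : (([RTree.leaf a, chain (b :: l)].map RTree.leaves).flatten) = a :: b :: l := by
      simp
    rw [h1, hw_orv_zero _ h]
    have h2 := chain_cost (b :: l) (fun y hy => h y (by simp at hy ⊢; tauto))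
    simp [h2]

lemma dOf_ex (c h : ℕ) : ∃ d : ℕ, c ≤ (h + 1) * 3 ^ d :=
  ⟨c, le_trans (le_of_lt (Nat.lt_pow_self (by norm_num : 1 < 3)))
    (Nat.le_mul_of_pos_left _ (by omega))⟩

def dOf (c h : ℕ) : ℕ := Nat.find (dOf_ex c h)

lemma dOf_spec (c h : ℕ) : c ≤ (h + 1) * 3 ^ dOf c h := Nat.find_spec (dOf_ex c h)

lemma dOf_min (c h : ℕ) (hd : 1 ≤ dOf c h) : (h + 1) * 3 ^ (dOf c h - 1) < c := by
  have := Nat.find_min (dOf_ex c h) (show dOf c h - 1 < dOf c h by omega)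
  omega

lemma sum_hw_eq {n : ℕ} (ys : List (Fin n → Bool)) :
    (ys.map hw).sum = Finset.univ.sum (fun i : Fin n => ys.countP (fun y => y i)) := by
  induction ys with
  | nil => simp
  | cons a l ih =>
    simp only [List.map_cons, List.sum_cons, List.countP_cons, ih]
    rw [Finset.sum_add_distrib]
    have h : hw a = ∑ i : Fin n, if a i then 1 else 0 := by
      rw [hw, Finset.card_filter]
    rw [h, Nat.add_comm]

lemma pairwise_of_countP {n : ℕ} (ys : List (Fin n → Bool))
    (h : ∀ i : Fin n, ys.countP (fun y => y i) ≤ 1) : ys.Pairwise disj := by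
  induction ys with
  | nil => exact List.Pairwise.nil
  | cons a l ih =>
    refine List.Pairwise.cons ?_ (ih ?_)
    · intro b hb i hi
      have h1 : 0 < l.countP (fun y => y i) := List.countP_pos_iff.mpr ⟨b, hb, by simp [hi.2]⟩
      have h2 := h i
      rw [List.countP_cons] at h2
      rw [if_pos (show ((fun (y : Fin n → Bool) => y i) a) = true from hi.1)] at h2
      exact Nat.lt_irrefl 0 (Nat.lt_of_lt_of_le h1 (Nat.le_of_succ_le_succ h2))
    · intro i
      exact le_trans ((List.sublist_cons_self a l).countP_le) (h i)

lemma hw_orv_full {n : ℕ} (ys : List (Fin n → Bool))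
    (h : ∀ i : Fin n, ys.countP (fun y => y i) = 1) : hw (orv ys) = n := by
  rw [hw]
  have hall : ∀ i : Fin n, orv ys i = true := by
    intro i
    have : 0 < ys.countP (fun y => y i) := by rw [h i]; norm_num
    obtain ⟨y, hy, hyi⟩ := List.countP_pos_iff.mp this
    simp only [orv, List.any_eq_true]
    exact ⟨y, hy, hyi⟩
  rw [Finset.filter_true_of_mem (fun i _ => hall i)]
  simp

lemma flatten_map_singleton {α : Type*} (l : List α) : (l.map (fun y => [y])).flatten = l := by
  induction l with
  | nil => simp
  | cons a l ih => simp [ih]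

lemma cost_zero_of_fin_zero : ∀ t : RTree (Fin 0 → Bool), t.cost = 0 := by
  apply RTree.myind
  · intro a; simp
  · intro ts ih
    rw [RTree.cost_node]
    have h1 : hw (orv ((ts.map RTree.leaves).flatten)) = 0 := by
      rw [hw]
      simp
    rw [h1]
    simp only [Nat.zero_mul, Nat.zero_add]
    exact List.sum_eq_zero (by
      intro x hx
      simp only [List.mem_map] at hx
      obtain ⟨c, hc, rfl⟩ := hx
      exact ih c hc)

/-- Multi-class case (leaf-label columns with disjoint supports covering `[n]`):
a ternary Huffman tree `T` satisfies `c(T) ≤ n + (3n/log₂3)·H(p₁,…,p_m) + 3n` with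
`pⱼ = ‖yⱼ‖₁/n`, and hence `c(T) ≤ min_{T'} c(T') + 3n`. -/
theorem stmt_12 (n : ℕ) (ys : List (Fin n → Bool)) (hm : 2 ≤ ys.length)
    (hmc : ∀ i : Fin n, (ys.countP (fun y => y i)) = 1) :
    ∃ t : RTree (Fin n → Bool), t.leaves.Perm ys ∧ t.maxdeg ≤ 3 ∧
      ((n : ℝ) + t.cost ≤
        (n : ℝ) + (3 * n / Real.logb 2 3) *
          (ys.map (fun y => ((hw y : ℝ) / n) * Real.logb 2 ((hw y : ℝ) / n)⁻¹)).sum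
          + 3 * n) ∧
      ∀ t' : RTree (Fin n → Bool), t'.leaves.Perm ys →
        ((n : ℝ) + t.cost) ≤ ((n : ℝ) + t'.cost) + 3 * n := by
  rcases Nat.eq_zero_or_pos n with rfl | hn
  · refine ⟨chain ys, by simp, le_trans (chain_maxdeg ys) (by norm_num), ?_, ?_⟩
    · rw [cost_zero_of_fin_zero]
      simp
    · intro t' _
      rw [cost_zero_of_fin_zero]
      simp
  -- main case
  have hsumhw : (ys.map hw).sum = n := by
    rw [sum_hw_eq]
    simp [hmc]
  have hpairwise : ys.Pairwise disj := pairwise_of_countP ys (fun i => le_of_eq (hmc i))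
  have horv : hw (orv ys) = n := hw_orv_full ys hmc
  classical
  set P := ys.filter (fun y => decide (0 < hw y)) with hPdef
  set Z := ys.filter (fun y => !decide (0 < hw y)) with hZdef
  have hPZ : (P ++ Z).Perm ys := List.filter_append_perm _ ys
  have hZ0 : ∀ y ∈ Z, hw y = 0 := by
    intro y hy
    rw [hZdef] at hy
    simp only [List.mem_filter, Bool.not_eq_true', decide_eq_false_iff_not] at hy
    omega
  have hPpos : ∀ y ∈ P, 0 < hw y := by
    intro y hy
    rw [hPdef] at hy
    simp only [List.mem_filter, decide_eq_true_eq] at hy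
    exact hy.2
  have hPmem : ∀ y ∈ P, y ∈ ys := by
    intro y hy
    rw [hPdef] at hy
    exact (List.mem_filter.mp hy).1
  have hsumZ : (Z.map hw).sum = 0 := List.sum_eq_zero (by
    intro x hx
    simp only [List.mem_map] at hx
    obtain ⟨y, hy, rfl⟩ := hx
    exact hZ0 y hy)
  have hsumP : (P.map hw).sum = n := by
    have h := (hPZ.map hw).sum_eq
    rw [List.map_append, List.sum_append] at h
    omega
  have hwle : ∀ y ∈ ys, hw y ≤ n := by
    intro y hy
    have := list_mem_le_sum (ys.map hw) (hw y) (List.mem_map_of_mem hy)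
    omega
  set d : (Fin n → Bool) → ℕ := fun y => dOf (n + 1) (hw y - 1) with hddef
  have hdspec : ∀ y ∈ P, n + 1 ≤ hw y * 3 ^ d y := by
    intro y hy
    have h1 := dOf_spec (n + 1) (hw y - 1)
    have h2 : hw y - 1 + 1 = hw y := by have := hPpos y hy; omega
    rw [h2] at h1
    exact h1
  have hd1 : ∀ y ∈ P, 1 ≤ d y := by
    intro y hy
    by_contra hcon
    have h0 : d y = 0 := by omega
    have h3 := hdspec y hy
    rw [h0] at h3
    simp only [pow_zero, Nat.mul_one] at h3
    have := hwle y (hPmem y hy)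
    omega
  have hdmin : ∀ y ∈ P, hw y * 3 ^ (d y - 1) ≤ n := by
    intro y hy
    have h1 := dOf_min (n + 1) (hw y - 1) (hd1 y hy)
    have h2 : hw y - 1 + 1 = hw y := by have := hPpos y hy; omega
    rw [h2] at h1
    have h3 : d y = dOf (n + 1) (hw y - 1) := rfl
    rw [h3]
    omega
  haveI hto : IsTotal (Fin n → Bool) (fun a b => d a ≤ d b) := ⟨fun a b => le_total _ _⟩
  haveI htr : IsTrans (Fin n → Bool) (fun a b => d a ≤ d b) := ⟨fun a b c h1 h2 => le_trans h1 h2⟩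
  set SP := P.insertionSort (fun a b => d a ≤ d b) with hSPdef
  have hSPperm : SP.Perm P := List.perm_insertionSort _ _
  have hSPsorted : SP.Pairwise (fun a b => d a ≤ d b) := List.pairwise_insertionSort _ _
  have hSPmem : ∀ y ∈ SP, y ∈ P := fun y hy => hSPperm.mem_iff.mp hy
  set DD := (P.map d).foldr max 0 with hDDdef
  have hdle : ∀ y ∈ P, d y ≤ DD := fun y hy => list_le_foldr_max _ _ (List.mem_map_of_mem hy)
  set L : List (RTree (Fin n → Bool) × ℕ) :=
    SP.map (fun y => ((RTree.leaf y : RTree (Fin n → Bool)), d y)) ++ [(chain Z, DD)] with hLdef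
  have hLne : L ≠ [] := by rw [hLdef]; simp
  have hLsort : L.Pairwise (fun p q => p.2 ≤ q.2) := by
    rw [hLdef, List.pairwise_append]
    refine ⟨List.Pairwise.map _ (fun a b hab => hab) hSPsorted, by simp, ?_⟩
    intro p hp q hq
    simp only [List.mem_map] at hp
    obtain ⟨y, hy, rfl⟩ := hp
    simp only [List.mem_singleton] at hq
    subst hq
    exact hdle y (hSPmem y hy)
  have hLle : ∀ p ∈ L, p.2 ≤ DD := by
    rw [hLdef]
    intro p hp
    rcases List.mem_append.mp hp with hp | hp
    · simp only [List.mem_map] at hp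
      obtain ⟨y, hy, rfl⟩ := hp
      exact hdle y (hSPmem y hy)
    · simp only [List.mem_singleton] at hp
      subst hp
      exact le_refl _
  have hLmd : ∀ p ∈ L, p.1.maxdeg ≤ 3 := by
    rw [hLdef]
    intro p hp
    rcases List.mem_append.mp hp with hp | hp
    · simp only [List.mem_map] at hp
      obtain ⟨y, hy, rfl⟩ := hp
      simp
    · simp only [List.mem_singleton] at hp
      subst hp
      exact le_trans (chain_maxdeg Z) (by norm_num)
  have hLsum : (L.map (fun p => 3 ^ (DD - p.2))).sum ≤ 3 ^ DD := by
    rw [hLdef, List.map_append, List.sum_append, List.map_map]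
    simp only [Function.comp_def, List.map_cons, List.map_nil, List.sum_cons, List.sum_nil,
      Nat.sub_self, pow_zero]
    have hsp : ∀ y ∈ SP, (n + 1) * 3 ^ (DD - d y) ≤ hw y * 3 ^ DD := by
      intro y hy
      have h1 := hdspec y (hSPmem y hy)
      have h2 := hdle y (hSPmem y hy)
      calc (n + 1) * 3 ^ (DD - d y) ≤ (hw y * 3 ^ d y) * 3 ^ (DD - d y) :=
            Nat.mul_le_mul_right _ h1
        _ = hw y * 3 ^ DD := by
            rw [mul_assoc, ← pow_add]
            congr 2
            omega
    have hss : (n + 1) * (SP.map (fun y => 3 ^ (DD - d y))).sum ≤ n * 3 ^ DD := by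
      rw [← List.sum_map_mul_left]
      calc (SP.map (fun y => (n + 1) * 3 ^ (DD - d y))).sum
          ≤ (SP.map (fun y => hw y * 3 ^ DD)).sum := List.sum_le_sum hsp
        _ = (SP.map hw).sum * 3 ^ DD := by
            rw [← List.sum_map_mul_right]
        _ = n * 3 ^ DD := by rw [(hSPperm.map hw).sum_eq, hsumP]
    have hpow : 0 < 3 ^ DD := Nat.pow_pos (by norm_num)
    by_contra hcon
    push_neg at hcon
    have h3 : 3 ^ DD ≤ (SP.map (fun y => 3 ^ (DD - d y))).sum := by omega
    have h4 : (n + 1) * 3 ^ DD ≤ (n + 1) * (SP.map (fun y => 3 ^ (DD - d y))).sum :=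
      Nat.mul_le_mul_left _ h3
    have h5 : (n + 1) * 3 ^ DD = n * 3 ^ DD + 3 ^ DD := by ring
    omega
  obtain ⟨t, ht1, ht2, ht3⟩ := kraft DD L hLne hLsort hLle hLmd hLsum
  have hleaves : t.leaves = SP ++ Z := by
    rw [ht1, hLdef, List.map_append, List.flatten_append, List.map_map]
    simp only [Function.comp_def, RTree.leaves_leaf, chain_leaves, List.map_cons, List.map_nil,
      List.flatten_cons, List.flatten_nil, List.append_nil]
    rw [flatten_map_singleton]
  have hperm : t.leaves.Perm ys := by
    rw [hleaves]
    exact (hSPperm.append_right Z).trans hPZ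
  have hcost : t.cost ≤ (P.map (fun y => 3 * hw y * d y)).sum := by
    refine le_trans ht3 ?_
    rw [hLdef, List.map_append, List.sum_append, List.map_map]
    have hZc : (chain Z).cost = 0 := chain_cost Z hZ0
    have hZw : hw (orv (chain Z).leaves) = 0 := by
      rw [chain_leaves]
      exact hw_orv_zero Z hZ0
    simp only [Function.comp_def, RTree.cost_leaf, RTree.leaves_leaf, orv_singleton, hZc, hZw,
      List.map_cons, List.map_nil, List.sum_cons, List.sum_nil, Nat.zero_add, Nat.mul_zero,
      Nat.zero_mul, Nat.add_zero]
    rw [(hSPperm.map (fun y => 3 * hw y * d y)).sum_eq]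
  -- Real arithmetic
  have hlog2 : (0:ℝ) < Real.log 2 := Real.log_pos (by norm_num)
  have hlog3 : (0:ℝ) < Real.log 3 := Real.log_pos (by norm_num)
  have hlb23 : (0:ℝ) < Real.logb 2 3 := Real.logb_pos (by norm_num) (by norm_num)
  have hnR : (0:ℝ) < (n:ℝ) := by exact_mod_cast hn
  set Gf : (Fin n → Bool) → ℝ :=
    fun y => (3 / Real.log 3) * ((hw y : ℝ) * Real.log ((n:ℝ) / (hw y : ℝ))) with hGfdef
  set S := (ys.map (fun y => ((hw y : ℝ) / n) * Real.logb 2 ((hw y : ℝ) / n)⁻¹)).sum with hSdef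
  have hSG : (3 * (n:ℝ) / Real.logb 2 3) * S = (ys.map Gf).sum := by
    rw [hSdef, ← list_sum_map_const_mul]
    apply congrArg
    apply List.map_congr_left
    intro y hy
    rw [hGfdef]
    rcases Nat.eq_zero_or_pos (hw y) with h0 | hpos
    · simp [h0]
    · have hwR : (0:ℝ) < (hw y : ℝ) := by exact_mod_cast hpos
      rw [inv_div]
      simp only [Real.logb]
      field_simp
  have hGZ : (Z.map Gf).sum = 0 := List.sum_eq_zero (by
    intro x hx
    simp only [List.mem_map] at hx
    obtain ⟨y, hy, rfl⟩ := hx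
    simp [hGfdef, hZ0 y hy])
  have hGsplit : (ys.map Gf).sum = (P.map Gf).sum := by
    have h := (hPZ.map Gf).sum_eq
    rw [List.map_append, List.sum_append, hGZ, add_zero] at h
    exact h.symm
  have hPsumcast : (P.map (fun y => (hw y : ℝ))).sum = (n:ℝ) := by
    have : ((P.map hw).sum : ℝ) = (P.map (fun y => (hw y : ℝ))).sum := by
      rw [Nat.cast_list_sum, List.map_map]
      rfl
    rw [← this, hsumP]
  have hU : (t.cost : ℝ) ≤ 3 * (n:ℝ) + (3 * (n:ℝ) / Real.logb 2 3) * S := by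
    have h1 : (t.cost : ℝ) ≤ ((P.map (fun y => 3 * hw y * d y)).sum : ℝ) := by
      exact_mod_cast hcost
    rw [Nat.cast_list_sum, List.map_map] at h1
    have h2 : ∀ y ∈ P, ((Nat.cast ∘ fun y => 3 * hw y * d y) y : ℝ) ≤
        3 * (hw y : ℝ) + Gf y := by
      intro y hy
      have hpos := hPpos y hy
      have hwR : (0:ℝ) < (hw y : ℝ) := by exact_mod_cast hpos
      have hmin := hdmin y hy
      have hminR : (hw y : ℝ) * 3 ^ (d y - 1) ≤ (n:ℝ) := by exact_mod_cast hmin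
      have hfrac : (3:ℝ) ^ (d y - 1) ≤ (n:ℝ) / (hw y : ℝ) := by
        rw [le_div_iff₀ hwR]
        calc (3:ℝ) ^ (d y - 1) * (hw y : ℝ) = (hw y : ℝ) * 3 ^ (d y - 1) := by ring
          _ ≤ (n:ℝ) := hminR
      have hlogle : ((d y : ℝ) - 1) * Real.log 3 ≤ Real.log ((n:ℝ) / (hw y : ℝ)) := by
        have hl := Real.log_le_log (by positivity) hfrac
        rw [Real.log_pow] at hl
        have hcast : ((d y - 1 : ℕ) : ℝ) = (d y : ℝ) - 1 := by
          have := hd1 y hy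
          push_cast [Nat.cast_sub this]
          ring
        rw [hcast] at hl
        exact hl
      have h6 : ((d y : ℝ) - 1) ≤ Real.log ((n:ℝ) / (hw y : ℝ)) / Real.log 3 := by
        rw [le_div_iff₀ hlog3]
        exact hlogle
      have h7 := mul_le_mul_of_nonneg_left h6 (show (0:ℝ) ≤ 3 * (hw y : ℝ) by positivity)
      have h8 : 3 * (hw y : ℝ) * (Real.log ((n:ℝ) / (hw y : ℝ)) / Real.log 3) = Gf y := by
        rw [hGfdef]
        field_simp
      rw [h8] at h7
      simp only [Function.comp_apply]
      push_cast
      nlinarith [h7]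
    calc (t.cost : ℝ) ≤ (P.map (Nat.cast ∘ fun y => 3 * hw y * d y)).sum := h1
      _ ≤ (P.map (fun y => 3 * (hw y : ℝ) + Gf y)).sum := List.sum_le_sum h2
      _ = 3 * (n:ℝ) + (P.map Gf).sum := by
          rw [list_sum_map_add]
          congr 1
          rw [list_sum_map_const_mul, hPsumcast]
      _ = 3 * (n:ℝ) + (3 * (n:ℝ) / Real.logb 2 3) * S := by rw [← hGsplit, ← hSG]
  have hLB : ∀ t' : RTree (Fin n → Bool), t'.leaves.Perm ys →
      (3 * (n:ℝ) / Real.logb 2 3) * S ≤ (t'.cost : ℝ) := by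
    intro t' hp'
    have hdisj' : t'.leaves.Pairwise disj :=
      (List.Perm.pairwise_iff (fun h => disj_symm h) hp').mpr hpairwise
    have hphi := phi_ge t' hdisj'
    have hcphi := cost_ge_phi t'
    have horv' : hw (orv t'.leaves) = n := by rw [orv_perm hp', horv]
    rw [horv'] at hphi
    have hmono := mul_le_mul_of_nonneg_left hphi (show (0:ℝ) ≤ 3 / Real.log 3 by positivity)
    have hsum' : ((t'.leaves).map
        (fun y => (hw y : ℝ) * Real.log ((n:ℝ) / (hw y : ℝ)))).sum
        = ((ys).map (fun y => (hw y : ℝ) * Real.log ((n:ℝ) / (hw y : ℝ)))).sum :=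
      (hp'.map _).sum_eq
    have hid : (3 * (n:ℝ) / Real.logb 2 3) * S =
        (3 / Real.log 3) * ((ys).map
          (fun y => (hw y : ℝ) * Real.log ((n:ℝ) / (hw y : ℝ)))).sum := by
      rw [hSG, hGfdef, list_sum_map_const_mul]
    rw [hid, ← hsum']
    calc (3 / Real.log 3) * ((t'.leaves).map
          (fun y => (hw y : ℝ) * Real.log ((n:ℝ) / (hw y : ℝ)))).sum
        ≤ (3 / Real.log 3) * phi t' := hmono
      _ ≤ (t'.cost : ℝ) := hcphi
  refine ⟨t, hperm, ht2, ?_, ?_⟩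
  · have := hU
    push_cast
    linarith
  · intro t' hp'
    have h1 := hU
    have h2 := hLB t' hp'
    push_cast
    linarith
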